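/- For any Banach space X, the modulus of supporting smoothness λ⁺_X is a convex and continuous function on [0,1]. -/

import Mathlib

noncomputable def suppLam {X : Type*} [NormedAddCommGroup X] [NormedSpace ℝ X]
    (x y : X) (r : ℝ) : ℝ := sInf {l : ℝ | ‖x + r • y - l • x‖ = 1}

/-- `y` is quasiorthogonal to `x`: some norming functional of `x` vanishes at `y`. -/
def Quasiorth {X : Type*} [NormedAddCommGroup X] [NormedSpace ℝ X] (x y : X) : Prop :=
  ∃ p : X →L[ℝ] ℝ, ‖p‖ = 1 ∧ p x = ‖x‖ ∧ p y = 0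

/-- Modulus of supporting convexity `λ⁻_X`. -/
noncomputable def suppConvexity (X : Type*) [NormedAddCommGroup X] [NormedSpace ℝ X]
    (r : ℝ) : ℝ :=
  sInf {v : ℝ | ∃ (x y : X) (t : ℝ), ‖x‖ = 1 ∧ ‖y‖ = 1 ∧ Quasiorth x y ∧
    0 ≤ t ∧ t ≤ r ∧ v = min (suppLam x y t) (suppLam x (-y) t)}

/-- Modulus of supporting smoothness `λ⁺_X`. -/
noncomputable def suppSmoothness (X : Type*) [NormedAddCommGroup X] [NormedSpace ℝ X]
    (r : ℝ) : ℝ :=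
  sSup {v : ℝ | ∃ (x y : X) (t : ℝ), ‖x‖ = 1 ∧ ‖y‖ = 1 ∧ Quasiorth x y ∧
    0 ≤ t ∧ t ≤ r ∧ v = max (suppLam x y t) (suppLam x (-y) t)}

/-- Modulus of convexity `δ_X`. -/
noncomputable def modConvexity (X : Type*) [NormedAddCommGroup X] [NormedSpace ℝ X]
    (ε : ℝ) : ℝ :=
  sInf {v : ℝ | ∃ x y : X, ‖x‖ ≤ 1 ∧ ‖y‖ ≤ 1 ∧ ε ≤ ‖x - y‖ ∧ v = 1 - ‖x + y‖ / 2}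

/-- Modulus of smoothness `ρ_X`. -/
noncomputable def modSmoothness (X : Type*) [NormedAddCommGroup X] [NormedSpace ℝ X]
    (τ : ℝ) : ℝ :=
  sSup {v : ℝ | ∃ x y : X, ‖x‖ = 1 ∧ ‖y‖ = τ ∧ v = ‖x + y‖ / 2 + ‖x - y‖ / 2 - 1}

/-- Banaś modulus `b_X`. -/
noncomputable def banasMod (X : Type*) [NormedAddCommGroup X] [NormedSpace ℝ X]
    (ε : ℝ) : ℝ :=
  sSup {v : ℝ | ∃ x y : X, ‖x‖ ≤ 1 ∧ ‖y‖ ≤ 1 ∧ ‖x - y‖ ≤ ε ∧ v = 1 - ‖x + y‖ / 2}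

section Aux

variable {X : Type*} [NormedAddCommGroup X] [NormedSpace ℝ X]

lemma quasi_neg {x y : X} (h : Quasiorth x y) : Quasiorth x (-y) := by
  obtain ⟨p, h1, h2, h3⟩ := h
  exact ⟨p, h1, h2, by simp [h3]⟩

lemma aux_ge {x y : X} (hx : ‖x‖ = 1) (hq : Quasiorth x y) (t l : ℝ) :
    1 - l ≤ ‖x + t • y - l • x‖ := by
  obtain ⟨p, hp, hpx, hpy⟩ := hq
  have h1 : p (x + t • y - l • x) = 1 - l := by
    rw [map_sub, map_add, map_smul, map_smul, hpy, hpx, hx, smul_eq_mul, smul_eq_mul]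
    ring
  have h2 := p.le_opNorm (x + t • y - l • x)
  rw [hp, one_mul, Real.norm_eq_abs, h1] at h2
  exact (le_abs_self _).trans h2

lemma aux_nonneg {x y : X} (hx : ‖x‖ = 1) (hq : Quasiorth x y) {t l : ℝ}
    (h : ‖x + t • y - l • x‖ ≤ 1) : 0 ≤ l := by
  have := aux_ge hx hq t l
  linarith

lemma aux_cont (x y : X) (t : ℝ) : Continuous fun l : ℝ => ‖x + t • y - l • x‖ :=
  (continuous_const.sub (continuous_id.smul continuous_const)).norm

lemma aux_sInf_le {x y : X} (hx : ‖x‖ = 1) (hq : Quasiorth x y) {t l : ℝ}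
    (h : ‖x + t • y - l • x‖ ≤ 1) : suppLam x y t ≤ l := by
  have hl0 : 0 ≤ l := aux_nonneg hx hq h
  have h0 : 1 ≤ ‖x + t • y - (0:ℝ) • x‖ := by
    have := aux_ge hx hq t 0; linarith
  have hsub := intermediate_value_Icc' hl0 (aux_cont x y t).continuousOn
  obtain ⟨l', hl', hval⟩ := hsub ⟨h, h0⟩
  have hbdd : BddBelow {m : ℝ | ‖x + t • y - m • x‖ = 1} :=
    ⟨0, fun m hm => aux_nonneg hx hq (le_of_eq hm)⟩
  exact (csInf_le hbdd hval).trans hl'.2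

lemma aux_one {x y : X} (hy : ‖y‖ = 1) {t : ℝ} (ht0 : 0 ≤ t) (ht1 : t ≤ 1) :
    ‖x + t • y - (1:ℝ) • x‖ ≤ 1 := by
  have : x + t • y - (1:ℝ) • x = t • y := by module
  rw [this, norm_smul, Real.norm_eq_abs, abs_of_nonneg ht0, hy, mul_one]
  exact ht1

lemma suppLam_mem {x y : X} (hx : ‖x‖ = 1) (hy : ‖y‖ = 1) (hq : Quasiorth x y)
    {t : ℝ} (ht0 : 0 ≤ t) (ht1 : t ≤ 1) :
    ‖x + t • y - (suppLam x y t) • x‖ = 1 := by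
  have h0 : 1 ≤ ‖x + t • y - (0:ℝ) • x‖ := by
    have := aux_ge hx hq t 0; linarith
  have hsub := intermediate_value_Icc' zero_le_one (aux_cont x y t).continuousOn
  obtain ⟨l', _, hval⟩ := hsub ⟨aux_one hy ht0 ht1, h0⟩
  have hne : Set.Nonempty {m : ℝ | ‖x + t • y - m • x‖ = 1} := ⟨l', hval⟩
  have hclosed : IsClosed {m : ℝ | ‖x + t • y - m • x‖ = 1} :=
    isClosed_eq (aux_cont x y t) continuous_const
  have hbdd : BddBelow {m : ℝ | ‖x + t • y - m • x‖ = 1} :=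
    ⟨0, fun m hm => aux_nonneg hx hq (le_of_eq hm)⟩
  exact hclosed.csInf_mem hne hbdd

lemma suppLam_nonneg {x y : X} (hx : ‖x‖ = 1) (hy : ‖y‖ = 1) (hq : Quasiorth x y)
    {t : ℝ} (ht0 : 0 ≤ t) (ht1 : t ≤ 1) : 0 ≤ suppLam x y t :=
  aux_nonneg hx hq (le_of_eq (suppLam_mem hx hy hq ht0 ht1))

lemma suppLam_le_one {x y : X} (hx : ‖x‖ = 1) (hy : ‖y‖ = 1) (hq : Quasiorth x y)
    {t : ℝ} (ht0 : 0 ≤ t) (ht1 : t ≤ 1) : suppLam x y t ≤ 1 :=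
  aux_sInf_le hx hq (aux_one hy ht0 ht1)

lemma suppLam_zero {x y : X} (hx : ‖x‖ = 1) (hy : ‖y‖ = 1) (hq : Quasiorth x y) :
    suppLam x y 0 = 0 := by
  refine le_antisymm (aux_sInf_le hx hq ?_) (suppLam_nonneg hx hy hq le_rfl zero_le_one)
  have : x + (0:ℝ) • y - (0:ℝ) • x = x := by module
  rw [this, hx]

lemma suppLam_combo {x y : X} (hx : ‖x‖ = 1) (hy : ‖y‖ = 1) (hq : Quasiorth x y)
    {a b t₁ t₂ : ℝ} (ha : 0 ≤ a) (hb : 0 ≤ b) (hab : a + b = 1)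
    (h₁0 : 0 ≤ t₁) (h₁1 : t₁ ≤ 1) (h₂0 : 0 ≤ t₂) (h₂1 : t₂ ≤ 1) :
    suppLam x y (a * t₁ + b * t₂) ≤ a * suppLam x y t₁ + b * suppLam x y t₂ := by
  obtain rfl : b = 1 - a := by linarith
  set l₁ := suppLam x y t₁ with hl₁
  set l₂ := suppLam x y t₂ with hl₂
  have m₁ := suppLam_mem hx hy hq h₁0 h₁1
  have m₂ := suppLam_mem hx hy hq h₂0 h₂1
  apply aux_sInf_le hx hq
  have key : x + (a * t₁ + (1 - a) * t₂) • y - (a * l₁ + (1 - a) * l₂) • x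
      = a • (x + t₁ • y - l₁ • x) + (1 - a) • (x + t₂ • y - l₂ • x) := by module
  rw [key]
  calc ‖a • (x + t₁ • y - l₁ • x) + (1 - a) • (x + t₂ • y - l₂ • x)‖
      ≤ ‖a • (x + t₁ • y - l₁ • x)‖ + ‖(1 - a) • (x + t₂ • y - l₂ • x)‖ := norm_add_le _ _
    _ = a * ‖x + t₁ • y - l₁ • x‖ + (1 - a) * ‖x + t₂ • y - l₂ • x‖ := by
        rw [norm_smul, norm_smul, Real.norm_eq_abs, Real.norm_eq_abs,
          abs_of_nonneg ha, abs_of_nonneg hb]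
    _ = 1 := by rw [m₁, m₂]; ring

lemma suppLam_mono {x y : X} (hx : ‖x‖ = 1) (hy : ‖y‖ = 1) (hq : Quasiorth x y)
    {s t : ℝ} (hs0 : 0 ≤ s) (hst : s ≤ t) (ht1 : t ≤ 1) :
    suppLam x y s ≤ suppLam x y t := by
  rcases eq_or_lt_of_le (hs0.trans hst) with h | ht0
  · have hs : s = 0 := le_antisymm (by linarith) hs0
    have ht : t = 0 := h.symm
    rw [hs, ht]
  · have hrw : s = (s / t) * t + (1 - s / t) * 0 := by field_simp; ring
    have hd0 : 0 ≤ s / t := div_nonneg hs0 ht0.le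
    have hd1 : s / t ≤ 1 := div_le_one_of_le₀ hst ht0.le
    have hcombo := suppLam_combo hx hy hq (a := s / t) (b := 1 - s / t)
      hd0 (by linarith) (by ring) (ht0.le) ht1 le_rfl zero_le_one
    rw [← hrw, suppLam_zero hx hy hq, mul_zero, add_zero] at hcombo
    have hnn : 0 ≤ suppLam x y t := suppLam_nonneg hx hy hq ht0.le ht1
    nlinarith

lemma suppLam_slope {x y : X} (hx : ‖x‖ = 1) (hy : ‖y‖ = 1) (hq : Quasiorth x y)
    {s t : ℝ} (hs0 : 0 ≤ s) (hst : s ≤ t) (ht1 : t ≤ 1) (hs1 : s < 1) :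
    suppLam x y t ≤ suppLam x y s + (t - s) / (1 - s) := by
  have h1s : (0:ℝ) < 1 - s := by linarith
  have hrw : t = ((1 - t) / (1 - s)) * s + ((t - s) / (1 - s)) * 1 := by
    field_simp
    ring
  have ha : 0 ≤ (1 - t) / (1 - s) := div_nonneg (by linarith) h1s.le
  have hb : 0 ≤ (t - s) / (1 - s) := div_nonneg (by linarith) h1s.le
  have hab : (1 - t) / (1 - s) + (t - s) / (1 - s) = 1 := by field_simp; ring
  have hcombo := suppLam_combo hx hy hq ha hb hab hs0 hs1.le zero_le_one le_rfl
  rw [← hrw] at hcombo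
  have h1 : suppLam x y 1 ≤ 1 := suppLam_le_one hx hy hq zero_le_one le_rfl
  have h1' : 0 ≤ suppLam x y 1 := suppLam_nonneg hx hy hq zero_le_one le_rfl
  have hs' : 0 ≤ suppLam x y s := suppLam_nonneg hx hy hq hs0 (by linarith)
  have hA : (1 - t) / (1 - s) ≤ 1 := by
    rw [div_le_one h1s]; linarith
  nlinarith

lemma suppLam_one_approx {x y : X} (hx : ‖x‖ = 1) (hy : ‖y‖ = 1) (hq : Quasiorth x y)
    {ε : ℝ} (hε : 0 < ε) :
    ∃ s, 0 ≤ s ∧ s < 1 ∧ suppLam x y 1 ≤ suppLam x y s + ε := by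
  set M := sSup (suppLam x y '' Set.Ico 0 1) with hM
  have hne : (suppLam x y '' Set.Ico 0 1).Nonempty :=
    ⟨suppLam x y 0, 0, ⟨le_rfl, zero_lt_one⟩, rfl⟩
  have hbdd : BddAbove (suppLam x y '' Set.Ico 0 1) := by
    refine ⟨1, ?_⟩
    rintro v ⟨s, hs, rfl⟩
    exact suppLam_le_one hx hy hq hs.1 hs.2.le
  have key : suppLam x y 1 ≤ M := by
    apply aux_sInf_le hx hq
    apply le_of_forall_pos_le_add
    intro δ hδ
    obtain ⟨v, ⟨s₀, hs₀, rfl⟩, hv⟩ := exists_lt_of_lt_csSup hne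
      (show M - δ/2 < M by linarith)
    set s := max s₀ (1 - δ/2) with hs
    have hsmem : s ∈ Set.Ico (0:ℝ) 1 :=
      ⟨le_trans hs₀.1 (le_max_left _ _), max_lt hs₀.2 (by linarith)⟩
    have hgs : suppLam x y s₀ ≤ suppLam x y s :=
      suppLam_mono hx hy hq hs₀.1 (le_max_left _ _) hsmem.2.le
    have hgsM : suppLam x y s ≤ M := le_csSup hbdd ⟨s, hsmem, rfl⟩
    have hmem := suppLam_mem hx hy hq hsmem.1 hsmem.2.le
    have key2 : x + (1:ℝ) • y - M • x
        = (x + s • y - (suppLam x y s) • x) + (1 - s) • y + (suppLam x y s - M) • x := by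
      module
    rw [key2]
    calc ‖(x + s • y - (suppLam x y s) • x) + (1 - s) • y + (suppLam x y s - M) • x‖
        ≤ ‖(x + s • y - (suppLam x y s) • x) + (1 - s) • y‖ + ‖(suppLam x y s - M) • x‖ :=
          norm_add_le _ _
      _ ≤ ‖x + s • y - (suppLam x y s) • x‖ + ‖(1 - s) • y‖ + ‖(suppLam x y s - M) • x‖ := by
          have := norm_add_le (x + s • y - (suppLam x y s) • x) ((1 - s) • y)
          linarith
      _ = 1 + |1 - s| * 1 + |suppLam x y s - M| * 1 := by
          rw [hmem, norm_smul, norm_smul, Real.norm_eq_abs, Real.norm_eq_abs, hx, hy]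
      _ ≤ 1 + δ := by
          rw [abs_of_nonneg (by linarith [hsmem.2.le] : (0:ℝ) ≤ 1 - s),
            abs_of_nonpos (by linarith : suppLam x y s - M ≤ 0)]
          have hs2 : 1 - δ/2 ≤ s := le_max_right _ _
          linarith
  obtain ⟨v, ⟨s, hs, rfl⟩, hv⟩ := exists_lt_of_lt_csSup hne
    (show suppLam x y 1 - ε < M by linarith)
  exact ⟨s, hs.1, hs.2, by linarith⟩

end Aux

section Top

variable {X : Type*} [NormedAddCommGroup X] [NormedSpace ℝ X]

def smSet (X : Type*) [NormedAddCommGroup X] [NormedSpace ℝ X] (r : ℝ) : Set ℝ :=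
  {v : ℝ | ∃ (x y : X) (t : ℝ), ‖x‖ = 1 ∧ ‖y‖ = 1 ∧ Quasiorth x y ∧
    0 ≤ t ∧ t ≤ r ∧ v = max (suppLam x y t) (suppLam x (-y) t)}

lemma suppSmoothness_eq (r : ℝ) : suppSmoothness X r = sSup (smSet X r) := rfl

lemma smSet_bounds {r : ℝ} (hr : r ≤ 1) {v : ℝ} (hv : v ∈ smSet X r) : 0 ≤ v ∧ v ≤ 1 := by
  obtain ⟨x, y, t, hx, hy, hq, ht0, htr, rfl⟩ := hv
  have ht1 : t ≤ 1 := htr.trans hr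
  have hyn : ‖-y‖ = 1 := by rw [norm_neg]; exact hy
  constructor
  · exact le_trans (suppLam_nonneg hx hy hq ht0 ht1) (le_max_left _ _)
  · exact max_le (suppLam_le_one hx hy hq ht0 ht1)
      (suppLam_le_one hx hyn (quasi_neg hq) ht0 ht1)

lemma smSet_bddAbove {r : ℝ} (hr : r ≤ 1) : BddAbove (smSet X r) :=
  ⟨1, fun _ hv => (smSet_bounds hr hv).2⟩

lemma smSet_mono {s r : ℝ} (hsr : s ≤ r) : smSet X s ⊆ smSet X r := by
  rintro v ⟨x, y, t, hx, hy, hq, ht0, hts, rfl⟩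
  exact ⟨x, y, t, hx, hy, hq, ht0, hts.trans hsr, rfl⟩

lemma sm_nonneg {r : ℝ} (hr : r ≤ 1) : 0 ≤ suppSmoothness X r :=
  Real.sSup_nonneg fun _ hv => (smSet_bounds hr hv).1

lemma sm_mono {s r : ℝ} (hsr : s ≤ r) (hr : r ≤ 1) :
    suppSmoothness X s ≤ suppSmoothness X r := by
  rw [suppSmoothness_eq, suppSmoothness_eq]
  exact Real.sSup_le (fun v hv => le_csSup (smSet_bddAbove hr) (smSet_mono hsr hv))
    (sm_nonneg hr)

lemma sm_zero : suppSmoothness X 0 = 0 := by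
  refine le_antisymm (Real.sSup_le ?_ le_rfl) (sm_nonneg zero_le_one)
  rintro v ⟨x, y, t, hx, hy, hq, ht0, ht1, rfl⟩
  obtain rfl : t = 0 := le_antisymm ht1 ht0
  have hyn : ‖-y‖ = 1 := by rw [norm_neg]; exact hy
  rw [suppLam_zero hx hy hq, suppLam_zero hx hyn (quasi_neg hq)]
  simp

lemma sm_slope {s r : ℝ} (hs0 : 0 ≤ s) (hsr : s ≤ r) (hr : r ≤ 1) (hs1 : s < 1) :
    suppSmoothness X r ≤ suppSmoothness X s + (r - s) / (1 - s) := by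
  have hden : (0:ℝ) < 1 - s := by linarith
  have hrhs : 0 ≤ suppSmoothness X s + (r - s) / (1 - s) :=
    add_nonneg (sm_nonneg (by linarith)) (div_nonneg (by linarith) hden.le)
  rw [suppSmoothness_eq]
  apply Real.sSup_le _ hrhs
  rintro v ⟨x, y, t, hx, hy, hq, ht0, htr, rfl⟩
  have hyn : ‖-y‖ = 1 := by rw [norm_neg]; exact hy
  have hqn := quasi_neg hq
  by_cases hts : t ≤ s
  · have hmem : max (suppLam x y t) (suppLam x (-y) t) ∈ smSet X s :=
      ⟨x, y, t, hx, hy, hq, ht0, hts, rfl⟩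
    have := le_csSup (smSet_bddAbove hs1.le) hmem
    rw [← suppSmoothness_eq] at this
    have : (0:ℝ) ≤ (r - s)/(1 - s) := div_nonneg (by linarith) hden.le
    linarith [le_csSup (smSet_bddAbove hs1.le) hmem]
  · push_neg at hts
    have ht1 : t ≤ 1 := htr.trans hr
    have e₁ := suppLam_slope hx hy hq hs0 hts.le ht1 hs1
    have e₂ := suppLam_slope hx hyn hqn hs0 hts.le ht1 hs1
    have hmem : max (suppLam x y s) (suppLam x (-y) s) ∈ smSet X s :=
      ⟨x, y, s, hx, hy, hq, hs0, le_rfl, rfl⟩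
    have hf : max (suppLam x y s) (suppLam x (-y) s) ≤ suppSmoothness X s :=
      le_csSup (smSet_bddAbove hs1.le) hmem
    have hdd : (t - s) / (1 - s) ≤ (r - s) / (1 - s) := by gcongr
    have h1 : suppLam x y t ≤ suppSmoothness X s + (r - s) / (1 - s) := by
      have := le_max_left (suppLam x y s) (suppLam x (-y) s)
      linarith
    have h2 : suppLam x (-y) t ≤ suppSmoothness X s + (r - s) / (1 - s) := by
      have := le_max_right (suppLam x y s) (suppLam x (-y) s)
      linarith
    exact max_le h1 h2

lemma sm_convex_ineq {r₁ r₂ a b : ℝ} (hr₁ : r₁ ∈ Set.Icc (0:ℝ) 1)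
    (hr₂ : r₂ ∈ Set.Icc (0:ℝ) 1) (ha : 0 ≤ a) (hb : 0 ≤ b) (hab : a + b = 1) :
    suppSmoothness X (a * r₁ + b * r₂) ≤ a * suppSmoothness X r₁ + b * suppSmoothness X r₂ := by
  have hr0 : 0 ≤ a * r₁ + b * r₂ :=
    add_nonneg (mul_nonneg ha hr₁.1) (mul_nonneg hb hr₂.1)
  have hru : a * r₁ + b * r₂ ≤ 1 := by nlinarith [hr₁.2, hr₂.2]
  have hrhs : 0 ≤ a * suppSmoothness X r₁ + b * suppSmoothness X r₂ :=
    add_nonneg (mul_nonneg ha (sm_nonneg hr₁.2)) (mul_nonneg hb (sm_nonneg hr₂.2))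
  rw [suppSmoothness_eq]
  apply Real.sSup_le _ hrhs
  rintro v ⟨x, y, t, hx, hy, hq, ht0, htr, rfl⟩
  have hyn : ‖-y‖ = 1 := by rw [norm_neg]; exact hy
  have hqn := quasi_neg hq
  have M₁mem : max (suppLam x y r₁) (suppLam x (-y) r₁) ∈ smSet X r₁ :=
    ⟨x, y, r₁, hx, hy, hq, hr₁.1, le_rfl, rfl⟩
  have M₂mem : max (suppLam x y r₂) (suppLam x (-y) r₂) ∈ smSet X r₂ :=
    ⟨x, y, r₂, hx, hy, hq, hr₂.1, le_rfl, rfl⟩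
  have hM₁ : max (suppLam x y r₁) (suppLam x (-y) r₁) ≤ suppSmoothness X r₁ :=
    le_csSup (smSet_bddAbove hr₁.2) M₁mem
  have hM₂ : max (suppLam x y r₂) (suppLam x (-y) r₂) ≤ suppSmoothness X r₂ :=
    le_csSup (smSet_bddAbove hr₂.2) M₂mem
  have key : ∀ z : X, ‖z‖ = 1 → Quasiorth x z →
      suppLam x z t ≤ a * max (suppLam x y r₁) (suppLam x (-y) r₁)
        + b * max (suppLam x y r₂) (suppLam x (-y) r₂) → True := fun _ _ _ _ => trivial
  have step : ∀ z : X, ‖z‖ = 1 → Quasiorth x z →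
      suppLam x z r₁ ≤ max (suppLam x y r₁) (suppLam x (-y) r₁) →
      suppLam x z r₂ ≤ max (suppLam x y r₂) (suppLam x (-y) r₂) →
      suppLam x z t ≤ a * suppSmoothness X r₁ + b * suppSmoothness X r₂ := by
    intro z hz hqz h1 h2
    have hmono : suppLam x z t ≤ suppLam x z (a * r₁ + b * r₂) :=
      suppLam_mono hx hz hqz ht0 htr hru
    have hcombo := suppLam_combo hx hz hqz ha hb hab hr₁.1 hr₁.2 hr₂.1 hr₂.2
    have t1 : a * suppLam x z r₁ ≤ a * suppSmoothness X r₁ :=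
      mul_le_mul_of_nonneg_left (h1.trans hM₁) ha
    have t2 : b * suppLam x z r₂ ≤ b * suppSmoothness X r₂ :=
      mul_le_mul_of_nonneg_left (h2.trans hM₂) hb
    linarith
  exact max_le
    (step y hy hq (le_max_left _ _) (le_max_left _ _))
    (step (-y) hyn hqn (le_max_right _ _) (le_max_right _ _))

lemma sm_left_cont_one {ε : ℝ} (hε : 0 < ε) :
    ∃ s, 0 ≤ s ∧ s < 1 ∧ suppSmoothness X 1 ≤ suppSmoothness X s + ε := by
  by_cases hne : (smSet X 1).Nonempty
  · obtain ⟨v, hvmem, hv⟩ := exists_lt_of_lt_csSup hne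
      (show suppSmoothness X 1 - ε/2 < suppSmoothness X 1 by
        rw [suppSmoothness_eq]; linarith [le_refl (sSup (smSet X 1))])
    obtain ⟨x, y, t, hx, hy, hq, ht0, ht1, rfl⟩ := hvmem
    have hyn : ‖-y‖ = 1 := by rw [norm_neg]; exact hy
    have hqn := quasi_neg hq
    rcases lt_or_eq_of_le ht1 with htlt | hteq
    · refine ⟨t, ht0, htlt, ?_⟩
      have hmem : max (suppLam x y t) (suppLam x (-y) t) ∈ smSet X t :=
        ⟨x, y, t, hx, hy, hq, ht0, le_rfl, rfl⟩
      have := le_csSup (smSet_bddAbove htlt.le) hmem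
      rw [suppSmoothness_eq]
      rw [suppSmoothness_eq] at hv ⊢
      linarith
    · subst hteq
      obtain ⟨s₁, hs₁0, hs₁1, h₁⟩ := suppLam_one_approx hx hy hq (half_pos hε)
      obtain ⟨s₂, hs₂0, hs₂1, h₂⟩ := suppLam_one_approx hx hyn hqn (half_pos hε)
      set s := max s₁ s₂ with hs
      have hs0 : 0 ≤ s := le_trans hs₁0 (le_max_left _ _)
      have hslt : s < 1 := max_lt hs₁1 hs₂1
      refine ⟨s, hs0, hslt, ?_⟩
      have hg₁ : suppLam x y s₁ ≤ suppLam x y s :=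
        suppLam_mono hx hy hq hs₁0 (le_max_left _ _) hslt.le
      have hg₂ : suppLam x (-y) s₂ ≤ suppLam x (-y) s :=
        suppLam_mono hx hyn hqn hs₂0 (le_max_right _ _) hslt.le
      have hmem : max (suppLam x y s) (suppLam x (-y) s) ∈ smSet X s :=
        ⟨x, y, s, hx, hy, hq, hs0, le_rfl, rfl⟩
      have hf : max (suppLam x y s) (suppLam x (-y) s) ≤ suppSmoothness X s :=
        le_csSup (smSet_bddAbove hslt.le) hmem
      have b1 : suppLam x y 1 ≤ suppSmoothness X s + ε/2 := by
        have := le_max_left (suppLam x y s) (suppLam x (-y) s)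
        linarith
      have b2 : suppLam x (-y) 1 ≤ suppSmoothness X s + ε/2 := by
        have := le_max_right (suppLam x y s) (suppLam x (-y) s)
        linarith
      have := max_le b1 b2
      linarith
  · have hempty : smSet X 1 = ∅ := Set.not_nonempty_iff_eq_empty.mp hne
    refine ⟨1/2, by norm_num, by norm_num, ?_⟩
    have h1 : suppSmoothness X 1 = 0 := by
      rw [suppSmoothness_eq, hempty, Real.sSup_empty]
    have h2 : 0 ≤ suppSmoothness X (1/2) := sm_nonneg (by norm_num)
    linarith

end Top

theorem suppSmoothness_convexOn_continuousOn {X : Type*} [NormedAddCommGroup X]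
    [NormedSpace ℝ X] [CompleteSpace X] :
    ConvexOn ℝ (Set.Icc (0 : ℝ) 1) (suppSmoothness X) ∧
    ContinuousOn (suppSmoothness X) (Set.Icc (0 : ℝ) 1) := by
  constructor
  · refine ⟨convex_Icc 0 1, ?_⟩
    intro r₁ hr₁ r₂ hr₂ a b ha hb hab
    simpa [smul_eq_mul] using sm_convex_ineq hr₁ hr₂ ha hb hab
  · intro c hc
    rw [Metric.continuousWithinAt_iff]
    intro ε hε
    by_cases hc1 : c < 1
    · have h1c : (0:ℝ) < 1 - c := by linarith
      refine ⟨ε * (1 - c), mul_pos hε h1c, ?_⟩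
      intro r hr hdist
      rw [Real.dist_eq] at hdist ⊢
      rcases le_total r c with h | h
      · have hr1 : r < 1 := lt_of_le_of_lt h hc1
        have hslope := sm_slope (X := X) hr.1 h hc.2 hr1
        have hmono := sm_mono (X := X) h hc.2
        have habs : |suppSmoothness X r - suppSmoothness X c|
            = suppSmoothness X c - suppSmoothness X r := by
          rw [abs_sub_comm, abs_of_nonneg (by linarith)]
        rw [habs]
        have hnum : c - r < ε * (1 - r) := by
          have h1 : c - r < ε * (1 - c) := by
            have := abs_lt.mp hdist
            linarith [this.1]
          have h2 : ε * (1 - c) ≤ ε * (1 - r) := by nlinarith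
          linarith
        have : (c - r) / (1 - r) < ε := by
          rw [div_lt_iff₀ (by linarith : (0:ℝ) < 1 - r)]
          linarith
        linarith
      · have hslope := sm_slope (X := X) hc.1 h hr.2 hc1
        have hmono := sm_mono (X := X) h hr.2
        have habs : |suppSmoothness X r - suppSmoothness X c|
            = suppSmoothness X r - suppSmoothness X c := abs_of_nonneg (by linarith)
        rw [habs]
        have hnum : r - c < ε * (1 - c) := by
          have := abs_lt.mp hdist
          linarith [this.2]
        have : (r - c) / (1 - c) < ε := by
          rw [div_lt_iff₀ h1c]
          linarith
        linarith
    · obtain rfl : c = 1 := le_antisymm hc.2 (not_lt.mp hc1)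
      obtain ⟨s, hs0, hs1, hsle⟩ := sm_left_cont_one (X := X) (half_pos hε)
      refine ⟨1 - s, by linarith, ?_⟩
      intro r hr hdist
      rw [Real.dist_eq] at hdist ⊢
      have hsr : s ≤ r := by
        have := abs_lt.mp hdist
        linarith [this.1]
      have h1 := sm_mono (X := X) hsr hr.2
      have h2 := sm_mono (X := X) hr.2 (le_refl (1:ℝ))
      have habs : |suppSmoothness X r - suppSmoothness X 1|
          = suppSmoothness X 1 - suppSmoothness X r := by
        rw [abs_sub_comm, abs_of_nonneg (by linarith)]
      rw [habs]
      linarith
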